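/- Let φ be a flow on a compact metric space X. If φ is expansive on X \ Sing(φ), then φ is singular-expansive. -/

import Mathlib

open Set Metric Filter
open scoped Classical

variable {X : Type*}

/-- A (continuous) flow on a topological space, given as a map `φ : ℝ → X → X`. -/
def IsFlowMap [TopologicalSpace X] (φ : ℝ → X → X) : Prop :=
  Continuous (fun p : ℝ × X => φ p.1 p.2) ∧ (∀ x : X, φ 0 x = x) ∧
    ∀ t s : ℝ, ∀ x : X, φ (t + s) x = φ t (φ s x)

/-- The singular set of a flow. -/
def SingSet (φ : ℝ → X → X) : Set X := {x : X | ∀ t : ℝ, φ t x = x}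

/-- An increasing homeomorphism of `ℝ`: a strictly increasing continuous bijection. -/
def IncreasingHomeo (s : ℝ → ℝ) : Prop :=
  Continuous s ∧ StrictMono s ∧ Function.Bijective s

/-- Distance from a point to a set, with the convention that the distance
to the empty set is the diameter of the whole space. -/
noncomputable def distToSet [MetricSpace X] (z : X) (A : Set X) : ℝ :=
  if A = ∅ then Metric.diam (Set.univ : Set X) else Metric.infDist z A

/-- The orbit of a point under a flow. -/
def flowOrbit (φ : ℝ → X → X) (x : X) : Set X := Set.range fun t : ℝ => φ t x

/-- Bowen–Walters expansivity of a flow on a subset `Λ`. -/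
def ExpansiveOn [MetricSpace X] (φ : ℝ → X → X) (Λ : Set X) : Prop :=
  ∀ ε > (0:ℝ), ∃ δ > (0:ℝ), ∀ x ∈ Λ, ∀ y ∈ Λ, ∀ s : ℝ → ℝ, Continuous s → s 0 = 0 →
    (∀ t : ℝ, dist (φ t x) (φ (s t) y) ≤ δ) →
    ∃ τ ∈ Set.Icc (-ε) ε, y = φ τ x

/-- Komuro k*-expansivity of a flow on a subset `Λ`. -/
def KStarExpansiveOn [MetricSpace X] (φ : ℝ → X → X) (Λ : Set X) : Prop :=
  ∀ ε > (0:ℝ), ∃ δ > (0:ℝ), ∀ x ∈ Λ, ∀ y ∈ Λ, ∀ s : ℝ → ℝ,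
    IncreasingHomeo s → s 0 = 0 →
    (∀ t : ℝ, dist (φ t x) (φ (s t) y) ≤ δ) →
    ∃ t₀ : ℝ, ∃ τ ∈ Set.Icc (t₀ - ε) (t₀ + ε), φ (s t₀) y = φ τ x

/-- Singular expansivity of a flow on a subset `Λ`. -/
def SingularExpansiveOn [MetricSpace X] (φ : ℝ → X → X) (Λ : Set X) : Prop :=
  ∀ ε > (0:ℝ), ∃ δ > (0:ℝ), ∀ x ∈ Λ, ∀ y ∈ Λ, ∀ s : ℝ → ℝ, IncreasingHomeo s →
    (∀ t : ℝ, dist (φ t x) (φ (s t) y) ≤ δ * distToSet (φ t x) (SingSet φ)) →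
    ∃ t₀ : ℝ, ∃ τ ∈ Set.Icc (t₀ - ε) (t₀ + ε), φ (s t₀) y = φ τ x

/-- A periodic point of a flow: a nonsingular point with a positive period. -/
def IsPeriodicPoint (φ : ℝ → X → X) (x : X) : Prop :=
  x ∉ SingSet φ ∧ ∃ t : ℝ, 0 < t ∧ φ t x = x

/-- An invariant set `K` is dynamically isolated if it has a neighborhood `U`
with `K = ⋂_{t ∈ ℝ} φ_t(U)`. -/
def DynIsolated [TopologicalSpace X] (φ : ℝ → X → X) (K : Set X) : Prop :=
  ∃ U : Set X, K ⊆ interior U ∧ K = ⋂ t : ℝ, φ t '' U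

/-- Equicontinuity of a flow. -/
def EquicontinuousFlow [MetricSpace X] (φ : ℝ → X → X) : Prop :=
  ∀ ε > (0:ℝ), ∃ δ > (0:ℝ), ∀ x y : X, dist x y ≤ δ →
    ∀ t : ℝ, dist (φ t x) (φ t y) ≤ ε

/-- Singular equicontinuity of a flow. -/
def SingularEquicontinuous [MetricSpace X] (φ : ℝ → X → X) : Prop :=
  ∀ ε > (0:ℝ), ∃ δ > (0:ℝ), ∀ x y : X, dist x y ≤ δ * distToSet x (SingSet φ) →
    ∀ t : ℝ, dist (φ t x) (φ t y) ≤ ε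


lemma nonsing_invariant [TopologicalSpace X] {φ : ℝ → X → X} (hφ : IsFlowMap φ)
    {y : X} (hy : y ∉ SingSet φ) (r : ℝ) : φ r y ∉ SingSet φ := by
  intro hs
  apply hy
  have hconst : ∀ u : ℝ, φ u y = φ r y := by
    intro u
    have : φ u y = φ (u - r) (φ r y) := by
      rw [← hφ.2.2]; ring_nf
    rw [this, hs (u - r)]
  have h0 : y = φ r y := (hφ.2.1 y).symm.trans (hconst 0)
  intro t
  exact (hconst t).trans h0.symm

theorem expansive_off_sing_implies_singular_expansive
    [MetricSpace X] [CompactSpace X] (φ : ℝ → X → X) (hφ : IsFlowMap φ)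
    (h : ExpansiveOn φ (SingSet φ)ᶜ) : SingularExpansiveOn φ Set.univ := by
  intro ε hε
  obtain ⟨δ', hδ', hexp⟩ := h ε hε
  set D := Metric.diam (Set.univ : Set X) with hD
  have hD0 : 0 ≤ D := Metric.diam_nonneg
  refine ⟨min (δ' / (D + 1)) (1 / 2), lt_min (by positivity) (by norm_num), ?_⟩
  intro x _ y _ s hs hd
  set δ := min (δ' / (D + 1)) (1 / 2) with hδdef
  have hδhalf : δ ≤ 1 / 2 := min_le_right _ _
  by_cases hx : x ∈ SingSet φ
  · -- x singular: distances to singular set are 0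
    have hne : SingSet φ ≠ ∅ := Set.nonempty_iff_ne_empty.mp ⟨x, hx⟩
    have h0 : distToSet (φ 0 x) (SingSet φ) = 0 := by
      rw [distToSet, if_neg hne, hφ.2.1]
      exact Metric.infDist_zero_of_mem hx
    have := hd 0
    rw [h0, mul_zero] at this
    have heq : φ (s 0) y = φ 0 x := (dist_le_zero.mp this).symm
    exact ⟨0, 0, ⟨by linarith, by linarith⟩, by simpa [hφ.2.1] using heq⟩
  · by_cases hy : y ∈ SingSet φ
    · -- y singular but x not: contradiction
      exfalso
      have hne : SingSet φ ≠ ∅ := Set.nonempty_iff_ne_empty.mp ⟨y, hy⟩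
      have hall : ∀ t : ℝ, φ t x = y := by
        intro t
        have h1 := hd t
        rw [hy (s t)] at h1
        rw [distToSet, if_neg hne] at h1
        have h2 : Metric.infDist (φ t x) (SingSet φ) ≤ dist (φ t x) y :=
          Metric.infDist_le_dist_of_mem hy
        have h3 : 0 ≤ dist (φ t x) y := dist_nonneg
        have h4 : 0 ≤ Metric.infDist (φ t x) (SingSet φ) := Metric.infDist_nonneg
        have : dist (φ t x) y ≤ (1 / 2) * dist (φ t x) y := by
          calc dist (φ t x) y ≤ δ * Metric.infDist (φ t x) (SingSet φ) := h1
            _ ≤ (1 / 2) * dist (φ t x) y := by nlinarith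
        have : dist (φ t x) y = 0 := by linarith
        exact dist_eq_zero.mp this
      apply hx
      have hxy : x = y := by rw [← hφ.2.1 x, hall 0]
      intro t; rw [hall t, hxy]
    · -- both nonsingular
      set y' := φ (s 0) y with hy'def
      have hy' : y' ∉ SingSet φ := nonsing_invariant hφ hy (s 0)
      set s' : ℝ → ℝ := fun t => s t - s 0 with hs'def
      have hs'c : Continuous s' := hs.1.sub continuous_const
      have hs'0 : s' 0 = 0 := sub_self _
      have hkey : ∀ t : ℝ, φ (s' t) y' = φ (s t) y := by
        intro t
        rw [hy'def, ← hφ.2.2]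
        simp only [hs'def]
        ring_nf
      have hbound : ∀ t : ℝ, dist (φ t x) (φ (s' t) y') ≤ δ' := by
        intro t
        rw [hkey t]
        have hDS : distToSet (φ t x) (SingSet φ) ≤ D := by
          rw [distToSet]
          split_ifs with he
          · exact le_refl D
          · obtain ⟨a, ha⟩ := Set.nonempty_iff_ne_empty.mpr he
            calc Metric.infDist (φ t x) (SingSet φ) ≤ dist (φ t x) a :=
                  Metric.infDist_le_dist_of_mem ha
              _ ≤ D := Metric.dist_le_diam_of_mem
                  isCompact_univ.isBounded (Set.mem_univ _) (Set.mem_univ _)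
        have hDSnn : 0 ≤ distToSet (φ t x) (SingSet φ) := by
          rw [distToSet]; split_ifs
          · exact hD0
          · exact Metric.infDist_nonneg
        calc dist (φ t x) (φ (s t) y) ≤ δ * distToSet (φ t x) (SingSet φ) := hd t
          _ ≤ (δ' / (D + 1)) * D := by
              apply mul_le_mul (min_le_left _ _) hDS hDSnn
              positivity
          _ ≤ δ' := by
              rw [div_mul_eq_mul_div, div_le_iff₀ (by linarith)]
              nlinarith
      obtain ⟨τ, hτ, hτeq⟩ := hexp x hx y' hy' s' hs'c hs'0 hbound
      refine ⟨0, τ, ⟨by simpa using hτ.1, by simpa using hτ.2⟩, ?_⟩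
      rw [← hτeq]
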